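/- (Corollary on unobserved-location entropy reduction, late columns.) Let 2m+1 ≤ i ≤ n−1 and i+1 ≤ t ≤ n, and for each j = 1, …, n let x_j be a vector of k distinct locations of column j, with u_j the complementary vector of the remaining r−k locations of column j. Then H(Z_{u_t} | Z_{x_{1:i−m−1}}, Z_{u_{1:t−1}}) − H(Z_{u_t} | Z_{x_{1:i−m−1}}, Z_{u_{1:t−1}}, Z_{x_{i−m}}) ≤ k(r−k) · log(1 + ξ²/(η(1+η))). -/

import Mathlib

open Finset

/-- Covariance matrix of the GP: kernel plus sensor noise on the diagonal. -/
noncomputable def SigmaMat {D : Type*} [DecidableEq D] (K : D → D → ℝ) (σn2 : ℝ) :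
    Matrix D D ℝ :=
  Matrix.of fun x y => K x y + if x = y then σn2 else 0

/-- Submatrix of covariances between the entries of two finsets of locations. -/
noncomputable def subMat {D : Type*} (Cov : Matrix D D ℝ) (a s : Finset D) :
    Matrix ↥a ↥s ℝ :=
  Matrix.of fun p q => Cov p.1 q.1

/-- Posterior covariance `Σ_{aa|s} = Σ_{aa} - Σ_{as} Σ_{ss}⁻¹ Σ_{sa}`. -/
noncomputable def postCov {D : Type*} [DecidableEq D] (Cov : Matrix D D ℝ) (a s : Finset D) :
    Matrix ↥a ↥a ℝ :=
  subMat Cov a a - subMat Cov a s * (subMat Cov s s)⁻¹ * subMat Cov s a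

/-- Gaussian conditional entropy `H(Z_a | Z_s) = (1/2) log((2πe)^{|a|} det Σ_{aa|s})`. -/
noncomputable def condEnt {D : Type*} [DecidableEq D] (Cov : Matrix D D ℝ) (a s : Finset D) : ℝ :=
  (1/2) * Real.log ((2 * Real.pi * Real.exp 1) ^ a.card * (postCov Cov a s).det)

/-- Gaussian joint entropy `H(Z_a)`. -/
noncomputable def ent {D : Type*} [DecidableEq D] (Cov : Matrix D D ℝ) (a : Finset D) : ℝ :=
  condEnt Cov a ∅

/-- Mutual information `I(Z_a ; Z_b) = H(Z_a) - H(Z_a | Z_b)`. -/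
noncomputable def mutInf {D : Type*} [DecidableEq D] (Cov : Matrix D D ℝ) (a b : Finset D) : ℝ :=
  ent Cov a - condEnt Cov a b

/-- Conditional mutual information `I(Z_a ; Z_b | Z_s) = H(Z_a | Z_s) - H(Z_a | Z_s, Z_b)`. -/
noncomputable def condMutInf {D : Type*} [DecidableEq D] (Cov : Matrix D D ℝ)
    (a b s : Finset D) : ℝ :=
  condEnt Cov a s - condEnt Cov a (s ∪ b)

/-- Posterior variance `Σ_{yy|A}` of a single location `y`. -/
noncomputable def postVar {D : Type*} [DecidableEq D] (Cov : Matrix D D ℝ) (y : D)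
    (A : Finset D) : ℝ :=
  postCov Cov {y} A ⟨y, Finset.mem_singleton_self y⟩ ⟨y, Finset.mem_singleton_self y⟩

/-- Concatenation `x_{i:j}` of the column selections from column `i` to column `j`. -/
def seg {D : Type*} [DecidableEq D] (x : ℕ → Finset D) (i j : ℕ) : Finset D :=
  (Finset.Icc i j).biUnion x

/-- The set of the `r` locations of column `i`. -/
def column {D : Type*} [Fintype D] (col : D → ℕ) (i : ℕ) : Finset D :=
  Finset.univ.filter (fun p => col p = i)

/-- The complementary vector `u_i` of unobserved locations of column `i` for a path `x`. -/
def ucomp {D : Type*} [Fintype D] [DecidableEq D] (col : D → ℕ) (x : ℕ → Finset D) :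
    ℕ → Finset D :=
  fun i => column col i \ x i

/-- A path selects, in every column `i = 1,…,n`, a vector of `k` distinct locations of
column `i`. -/
def IsPath {D : Type*} [Fintype D] (col : D → ℕ) (n k : ℕ) (x : ℕ → Finset D) : Prop :=
  ∀ i, 1 ≤ i → i ≤ n → x i ⊆ column col i ∧ (x i).card = k

open Matrix

section helpers
variable {D : Type*} [Fintype D] [DecidableEq D]

omit [Fintype D] in
lemma sigma_eq (K : D → D → ℝ) (σn2 : ℝ) :
    SigmaMat K σn2 = Matrix.of K + σn2 • (1 : Matrix D D ℝ) := by
  ext x y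
  simp [SigmaMat, Matrix.one_apply, mul_ite]

lemma sigma_posDef {K : D → D → ℝ} {σn2 : ℝ} (hK : (Matrix.of K).PosSemidef)
    (hn : 0 < σn2) : (SigmaMat K σn2).PosDef := by
  rw [sigma_eq]
  have hsm : (σn2 • (1 : Matrix D D ℝ)).IsHermitian := by
    rw [smul_one_eq_diagonal]; exact Matrix.isHermitian_diagonal _
  refine Matrix.PosDef.of_dotProduct_mulVec_pos ?_ ?_
  · exact hK.1.add hsm
  · intro x hx
    have h1 : (0:ℝ) ≤ star x ⬝ᵥ (Matrix.of K) *ᵥ x := hK.dotProduct_mulVec_nonneg x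
    have h2 : star x ⬝ᵥ (σn2 • (1 : Matrix D D ℝ)) *ᵥ x = σn2 * (star x ⬝ᵥ x) := by
      rw [Matrix.smul_mulVec, Matrix.one_mulVec, dotProduct_smul, smul_eq_mul]
    have h3 : (0:ℝ) < star x ⬝ᵥ x := by
      exact dotProduct_star_self_pos_iff.mpr hx
    calc (0:ℝ) < 0 + σn2 * (star x ⬝ᵥ x) := by positivity
    _ ≤ star x ⬝ᵥ (Matrix.of K) *ᵥ x + σn2 * (star x ⬝ᵥ x) := by linarith
    _ = star x ⬝ᵥ ((Matrix.of K) + σn2 • 1) *ᵥ x := by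
        rw [Matrix.add_mulVec, dotProduct_add, h2]

/-- A principal submatrix (along an injective map) of a positive definite matrix is
positive definite. -/
lemma posDef_submatrix_inj {n m : Type*} [Fintype n] [Fintype m]
    {M : Matrix n n ℝ} (hM : M.PosDef) {e : m → n} (he : Function.Injective e) :
    (M.submatrix e e).PosDef := by
  refine Matrix.PosDef.of_dotProduct_mulVec_pos (hM.1.submatrix e) (fun x hx => ?_)
  classical
  set y : n → ℝ := Function.extend e x 0 with hy
  have hye : ∀ i, y (e i) = x i := fun i => he.extend_apply x 0 i
  have hkey : ∀ f : n → ℝ, ∑ j, y j * f j = ∑ i, x i * f (e i) := by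
    intro f
    have h0 : ∀ j ∈ Finset.univ, j ∉ Finset.univ.image e → y j * f j = 0 := by
      intro j _ hj
      have : y j = 0 := by
        rw [hy, Function.extend_apply' _ _ _ (by
          intro ⟨i, hi⟩; exact hj (Finset.mem_image.mpr ⟨i, Finset.mem_univ i, hi⟩))]
        rfl
      rw [this, zero_mul]
    rw [← Finset.sum_subset (Finset.subset_univ (Finset.univ.image e)) h0,
      Finset.sum_image (fun a _ b _ h => he h)]
    simp [hye]
  have hyx : y ≠ 0 := by
    intro h
    apply hx
    funext i
    have := congrFun h (e i)
    rwa [hye] at this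
  have := hM.dotProduct_mulVec_pos hyx
  have hs1 : star y ⬝ᵥ M *ᵥ y = ∑ j, y j * ∑ j', M j j' * y j' := by
    simp [dotProduct, Matrix.mulVec]
  have hs2 : star x ⬝ᵥ (M.submatrix e e) *ᵥ x
      = ∑ i, x i * ∑ i', (M.submatrix e e) i i' * x i' := by
    simp [dotProduct, Matrix.mulVec]
  have hrw : star y ⬝ᵥ M *ᵥ y = star x ⬝ᵥ (M.submatrix e e) *ᵥ x := by
    rw [hs1, hs2, hkey]
    refine Finset.sum_congr rfl (fun i _ => ?_)
    congr 1
    have h1 : ∑ j', M (e i) j' * y j' = ∑ j', y j' * M (e i) j' :=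
      Finset.sum_congr rfl (fun j _ => mul_comm _ _)
    rw [h1, hkey]
    exact Finset.sum_congr rfl (fun j _ => by rw [Matrix.submatrix_apply, mul_comm])
  rwa [hrw] at this

end helpers

section detsplit
variable {D : Type*} [Fintype D] [DecidableEq D]

/-- Equivalence between a disjoint union of finsets and the union. -/
def unionEquiv {B S : Finset D} (h : Disjoint B S) : ↥B ⊕ ↥S ≃ ↥(B ∪ S) where
  toFun := Sum.elim (fun p => ⟨p.1, Finset.mem_union_left _ p.2⟩)
    (fun p => ⟨p.1, Finset.mem_union_right _ p.2⟩)
  invFun := fun p => if hp : p.1 ∈ B then Sum.inl ⟨p.1, hp⟩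
    else Sum.inr ⟨p.1, (Finset.mem_union.mp p.2).resolve_left hp⟩
  left_inv := by
    rintro (p | p)
    · simp
    · have : p.1 ∉ B := fun hp => (Finset.disjoint_left.mp h hp) p.2
      simp [this]
  right_inv := by
    intro p
    by_cases hp : p.1 ∈ B <;> simp [hp]

omit [Fintype D] in
lemma subMat_eq_submatrix (Cov : Matrix D D ℝ) (A : Finset D) :
    subMat Cov A A = Cov.submatrix Subtype.val Subtype.val := rfl

lemma subMat_posDef {Cov : Matrix D D ℝ} (hCov : Cov.PosDef) (A : Finset D) :
    (subMat Cov A A).PosDef := by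
  rw [subMat_eq_submatrix]
  exact posDef_submatrix_inj hCov Subtype.val_injective

/-- Schur-complement determinant split:
`det Σ_{(B∪S)(B∪S)} = det Σ_{SS} · det Σ_{BB|S}`. -/
lemma det_union_split {Cov : Matrix D D ℝ} (hCov : Cov.PosDef) {B S : Finset D}
    (h : Disjoint B S) :
    (subMat Cov (B ∪ S) (B ∪ S)).det = (subMat Cov S S).det * (postCov Cov B S).det := by
  have hSS : (subMat Cov S S).PosDef := subMat_posDef hCov S
  haveI : Invertible (subMat Cov S S) := hSS.isUnit.invertible
  set e := unionEquiv h with he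
  have hre : (subMat Cov (B ∪ S) (B ∪ S)).det
      = ((subMat Cov (B ∪ S) (B ∪ S)).submatrix e e).det :=
    (Matrix.det_submatrix_equiv_self e _).symm
  have hblock : (subMat Cov (B ∪ S) (B ∪ S)).submatrix e e
      = Matrix.fromBlocks (subMat Cov B B) (subMat Cov B S) (subMat Cov S B)
        (subMat Cov S S) := by
    ext i j
    rcases i with (i | i) <;> rcases j with (j | j) <;>
      simp [he, unionEquiv, subMat] <;> rfl
  rw [hre, hblock, Matrix.det_fromBlocks₂₂, Matrix.invOf_eq_nonsing_inv]
  rfl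

end detsplit

section chain
variable {D : Type*} [Fintype D] [DecidableEq D]

instance uniqueSingletonSub (p : D) : Unique ↥({p} : Finset D) :=
  ⟨⟨⟨p, Finset.mem_singleton_self p⟩⟩, fun a => Subtype.ext (Finset.mem_singleton.mp a.2)⟩

omit [Fintype D] in
lemma det_postCov_singleton [Fintype D] (Cov : Matrix D D ℝ) (p : D) (A : Finset D) :
    (postCov Cov {p} A).det = postVar Cov p A := by
  rw [Matrix.det_unique]
  rfl

lemma postCov_det_pos {Cov : Matrix D D ℝ} (hCov : Cov.PosDef) {B S : Finset D}
    (h : Disjoint B S) : 0 < (postCov Cov B S).det := by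
  have h1 := det_union_split hCov h
  have h2 : 0 < (subMat Cov (B ∪ S) (B ∪ S)).det := (subMat_posDef hCov _).det_pos
  have h3 : 0 < (subMat Cov S S).det := (subMat_posDef hCov _).det_pos
  nlinarith [h2, h3, mul_pos h2 h3]

lemma postVar_pos {Cov : Matrix D D ℝ} (hCov : Cov.PosDef) {p : D} {A : Finset D}
    (h : p ∉ A) : 0 < postVar Cov p A := by
  rw [← det_postCov_singleton]
  exact postCov_det_pos hCov (by simpa using h)

/-- Chain rule / Schur quotient identity. -/
lemma det_postCov_insert {Cov : Matrix D D ℝ} (hCov : Cov.PosDef) {p : D} {A S : Finset D}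
    (hpA : p ∉ A) (hpS : p ∉ S) (hAS : Disjoint A S) :
    (postCov Cov (insert p A) S).det = (postCov Cov A S).det * postVar Cov p (S ∪ A) := by
  have hPAS : Disjoint (insert p A) S := by
    rw [Finset.disjoint_insert_left]
    exact ⟨hpS, hAS⟩
  have hpAS : Disjoint ({p} : Finset D) (A ∪ S) := by
    simp [hpA, hpS]
  have hset : insert p A ∪ S = {p} ∪ (A ∪ S) := by
    ext z; simp [or_assoc]
  have h1 := det_union_split hCov hPAS
  have h2 := det_union_split hCov hpAS
  have h3 := det_union_split hCov hAS
  rw [hset] at h1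
  rw [h2, h3] at h1
  have h4 : (postCov Cov {p} (A ∪ S)).det = postVar Cov p (S ∪ A) := by
    rw [det_postCov_singleton, Finset.union_comm]
  rw [h4] at h1
  have hdS : (subMat Cov S S).det ≠ 0 := (subMat_posDef hCov S).det_pos.ne'
  apply mul_left_cancel₀ hdS
  rw [← h1]; ring

end chain

section varbound
variable {D : Type*} [Fintype D] [DecidableEq D]

lemma sigma_symm {K : D → D → ℝ} {σn2 : ℝ} (hKsymm : ∀ p q : D, K p q = K q p) (p q : D) :
    SigmaMat K σn2 p q = SigmaMat K σn2 q p := by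
  simp only [SigmaMat, Matrix.of_apply, hKsymm p q]
  congr 1
  simp [eq_comm]

omit [Fintype D] in
lemma postVar_eq [Fintype D] (Cov : Matrix D D ℝ) (p : D) (A : Finset D) :
    postVar Cov p A
      = Cov p p - ∑ j : ↥A, Cov p j.1 * ((subMat Cov A A)⁻¹ *ᵥ (fun k => Cov k.1 p)) j := by
  simp only [postVar, postCov, Matrix.sub_apply, Matrix.mul_apply, subMat, Matrix.of_apply,
    Matrix.mulVec, dotProduct]
  congr 1
  simp only [Finset.sum_mul, Finset.mul_sum]
  rw [Finset.sum_comm]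
  exact Finset.sum_congr rfl fun j _ => Finset.sum_congr rfl fun k _ => by ring

lemma postVar_ge {K : D → D → ℝ} {σn2 : ℝ} (hK : (Matrix.of K).PosSemidef)
    (hKsymm : ∀ p q : D, K p q = K q p) (hn : 0 < σn2) {p : D} {A : Finset D} (hpA : p ∉ A) :
    σn2 ≤ postVar (SigmaMat K σn2) p A := by
  set Sg := SigmaMat K σn2 with hSg
  have hPD : Sg.PosDef := sigma_posDef hK hn
  set M := subMat Sg A A with hM
  haveI : Invertible M := (subMat_posDef hPD A).isUnit.invertible
  set c : ↥A → ℝ := fun k => Sg k.1 p with hc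
  set w : ↥A → ℝ := M⁻¹ *ᵥ c with hw
  have hMw : M *ᵥ w = c := by
    rw [hw, Matrix.mulVec_mulVec, Matrix.mul_inv_of_invertible, Matrix.one_mulVec]
  set u : D → ℝ := fun z => if hz : z ∈ A then -(w ⟨z, hz⟩) else (if z = p then 1 else 0) with hu
  have hup : u p = 1 := by simp [hu, hpA]
  have huA : ∀ (j : ↥A), u j.1 = -(w j) := fun j => by simp [hu, j.2]
  have hu0 : ∀ z, z ∉ insert p A → u z = 0 := by
    intro z hz
    rw [Finset.mem_insert] at hz
    push_neg at hz
    simp [hu, hz.1, hz.2]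
  set E := ∑ z ∈ insert p A, u z * ∑ z' ∈ insert p A, Sg z z' * u z' with hE
  have ha : star u ⬝ᵥ Sg *ᵥ u = E := by
    have h1 : ∀ z, (Sg *ᵥ u) z = ∑ z' ∈ insert p A, Sg z z' * u z' := by
      intro z
      rw [Matrix.mulVec, dotProduct]
      exact (Finset.sum_subset (Finset.subset_univ _)
        (fun z' _ hz' => by rw [hu0 z' hz', mul_zero])).symm
    rw [star_trivial, dotProduct, hE,
      ← Finset.sum_subset (Finset.subset_univ (insert p A))
        (fun z _ hz => by rw [hu0 z hz, zero_mul])]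
    exact Finset.sum_congr rfl fun z _ => by rw [h1]
  set S1 := ∑ j : ↥A, Sg p j.1 * w j with hS1
  have hb : E = Sg p p - S1 := by
    have hinner : ∀ z, ∑ z' ∈ insert p A, Sg z z' * u z'
        = Sg z p - ∑ k : ↥A, Sg z k.1 * w k := by
      intro z
      rw [Finset.sum_insert hpA, hup, mul_one, ← Finset.sum_attach A (fun z' => Sg z z' * u z')]
      have : ∀ k : ↥A, Sg z k.1 * u k.1 = -(Sg z k.1 * w k) := fun k => by rw [huA k]; ring
      rw [Finset.sum_congr rfl (fun k _ => this k), Finset.sum_neg_distrib]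
      simp only [← Finset.univ_eq_attach]
      ring
    rw [hE, Finset.sum_insert hpA, hup, one_mul, hinner p,
      ← Finset.sum_attach A (fun z => u z * ∑ z' ∈ insert p A, Sg z z' * u z')]
    have hrow : ∀ j : ↥A, u j.1 * ∑ z' ∈ insert p A, Sg j.1 z' * u z'
        = -(w j * Sg j.1 p) + w j * ∑ k : ↥A, Sg j.1 k.1 * w k := by
      intro j
      rw [hinner j.1, huA j]
      ring
    rw [Finset.sum_congr rfl (fun j _ => hrow j), Finset.sum_add_distrib,
      Finset.sum_neg_distrib]
    simp only [← Finset.univ_eq_attach]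
    have hQ : ∑ j : ↥A, w j * ∑ k : ↥A, Sg j.1 k.1 * w k = ∑ j : ↥A, w j * c j := by
      refine Finset.sum_congr rfl fun j _ => ?_
      have : ∑ k : ↥A, Sg j.1 k.1 * w k = (M *ᵥ w) j := rfl
      rw [this, hMw]
    have hS2 : ∑ j : ↥A, w j * Sg j.1 p = ∑ j : ↥A, w j * c j := rfl
    rw [hQ, hS2, hS1]
    ring
  have hc2 : σn2 ≤ star u ⬝ᵥ Sg *ᵥ u := by
    rw [hSg, sigma_eq, Matrix.add_mulVec, dotProduct_add]
    have h1 : (0:ℝ) ≤ star u ⬝ᵥ (Matrix.of K) *ᵥ u := hK.dotProduct_mulVec_nonneg u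
    have h2 : star u ⬝ᵥ (σn2 • (1 : Matrix D D ℝ)) *ᵥ u = σn2 * (star u ⬝ᵥ u) := by
      rw [Matrix.smul_mulVec, Matrix.one_mulVec, dotProduct_smul, smul_eq_mul]
    have h3 : (1:ℝ) ≤ star u ⬝ᵥ u := by
      rw [star_trivial, dotProduct]
      calc (1:ℝ) = u p * u p := by rw [hup]; ring
      _ ≤ ∑ z, u z * u z :=
        Finset.single_le_sum (fun z _ => mul_self_nonneg (u z)) (Finset.mem_univ p)
    nlinarith
  have hpv : postVar Sg p A = Sg p p - S1 := by
    rw [postVar_eq]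
  rw [hpv, ← hb, ← ha]
  exact hc2

end varbound

section explicitvals
variable {D : Type*} [Fintype D] [DecidableEq D]

lemma postVar_empty (Cov : Matrix D D ℝ) (p : D) :
    postVar Cov p ∅ = Cov p p := by
  simp [postVar, postCov, Matrix.mul_apply, subMat]

lemma postVar_single (Cov : Matrix D D ℝ) (p q : D) :
    postVar Cov p {q} = Cov p p - Cov p q * (Cov q q)⁻¹ * Cov q p := by
  have hinv : ∀ i j : ↥({q} : Finset D), (subMat Cov {q} {q})⁻¹ i j = (Cov q q)⁻¹ := by
    intro i j
    have hij : i = j := Subsingleton.elim i j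
    have hj : j.1 = q := Finset.mem_singleton.mp j.2
    rw [Matrix.inv_subsingleton, hij, Matrix.diagonal_apply_eq, Ring.inverse_eq_inv']
    simp [subMat, hj]
  simp only [postVar, postCov, Matrix.sub_apply, Matrix.mul_apply]
  rw [Fintype.sum_unique, Fintype.sum_unique, hinv]
  have hd : (default : ↥({q} : Finset D)).1 = q :=
    Finset.mem_singleton.mp (default : ↥({q} : Finset D)).2
  simp [subMat, hd]

end explicitvals

section stepbound
variable {D : Type*} [Fintype D] [DecidableEq D]
variable {K : D → D → ℝ} {σs2 σn2 ξ : ℝ}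

/-- One-step entropy-reduction bound for a single pair of far-apart locations. -/
lemma step_bound (hK : (Matrix.of K).PosSemidef) (hKsymm : ∀ p q : D, K p q = K q p)
    (hs : 0 < σs2) (hn : 0 < σn2) (hξ0 : 0 ≤ ξ)
    (hKdiag : ∀ p : D, K p p = σs2)
    {p q : D} {A : Finset D} (hpq : p ≠ q) (hpA : p ∉ A) (hqA : q ∉ A)
    (hKpq : |K p q| ≤ σs2 * ξ)
    (hsub : postVar (SigmaMat K σn2) p A - postVar (SigmaMat K σn2) p (insert q A)
        ≤ postVar (SigmaMat K σn2) p ∅ - postVar (SigmaMat K σn2) p {q}) :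
    Real.log (postVar (SigmaMat K σn2) p A) - Real.log (postVar (SigmaMat K σn2) p (insert q A))
      ≤ Real.log (1 + ξ ^ 2 / ((σn2 / σs2) * (1 + σn2 / σs2))) := by
  set Sg := SigmaMat K σn2 with hSg
  set y : ℝ := ξ ^ 2 / ((σn2 / σs2) * (1 + σn2 / σs2)) with hy
  have hy0 : 0 ≤ y := by
    apply div_nonneg (sq_nonneg ξ)
    positivity
  have hv1 : σn2 ≤ postVar Sg p A := postVar_ge hK hKsymm hn hpA
  have hv2 : σn2 ≤ postVar Sg p (insert q A) := by
    refine postVar_ge hK hKsymm hn ?_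
    simp [Finset.mem_insert, hpq, hpA]
  have hSgpp : Sg p p = σs2 + σn2 := by simp [hSg, SigmaMat, hKdiag]
  have hSgqq : Sg q q = σs2 + σn2 := by simp [hSg, SigmaMat, hKdiag]
  have hSgpq : Sg p q = K p q := by simp [hSg, SigmaMat, hpq]
  have hSgqp : Sg q p = K p q := by simp [hSg, SigmaMat, hpq.symm, hKsymm q p]
  have hempty : postVar Sg p ∅ = σs2 + σn2 := by rw [postVar_empty, hSgpp]
  have hsingle : postVar Sg p ∅ - postVar Sg p {q} = K p q ^ 2 / (σs2 + σn2) := by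
    rw [hempty, postVar_single, hSgpp, hSgqq, hSgpq, hSgqp]
    field_simp
    ring
  have hKpq2 : K p q ^ 2 ≤ σs2 ^ 2 * ξ ^ 2 := by
    have h := sq_abs (K p q)
    nlinarith [abs_nonneg (K p q), hKpq]
  have hbound : postVar Sg p ∅ - postVar Sg p {q} ≤ σn2 * y := by
    rw [hsingle, hy]
    rw [div_le_iff₀ (by positivity)]
    have : σn2 * (ξ ^ 2 / (σn2 / σs2 * (1 + σn2 / σs2))) * (σs2 + σn2) = σs2 ^ 2 * ξ ^ 2 := by
      field_simp
    rw [this]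
    exact hKpq2
  have hle : postVar Sg p A ≤ postVar Sg p (insert q A) * (1 + y) := by
    have h1 : postVar Sg p A ≤ postVar Sg p (insert q A) + σn2 * y :=
      by linarith [hsub, hbound]
    nlinarith [hv2, hy0]
  calc Real.log (postVar Sg p A) - Real.log (postVar Sg p (insert q A))
      ≤ Real.log (postVar Sg p (insert q A) * (1 + y))
          - Real.log (postVar Sg p (insert q A)) := by
        have := Real.log_le_log (by linarith : (0:ℝ) < postVar Sg p A) hle
        linarith
    _ = Real.log (1 + y) := by
        rw [Real.log_mul (by linarith) (by nlinarith)]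
        ring

end stepbound

section chains
variable {D : Type*} [Fintype D] [DecidableEq D]
variable {K : D → D → ℝ} {σs2 σn2 ξ : ℝ}

lemma inner_chain (hK : (Matrix.of K).PosSemidef) (hKsymm : ∀ p q : D, K p q = K q p)
    (hs : 0 < σs2) (hn : 0 < σn2) (hξ0 : 0 ≤ ξ)
    (hKdiag : ∀ p : D, K p p = σs2)
    (hsub : ∀ (p q : D) (A : Finset D), p ∉ A → q ∉ A → p ≠ q →
      postVar (SigmaMat K σn2) p A - postVar (SigmaMat K σn2) p (insert q A)
        ≤ postVar (SigmaMat K σn2) p ∅ - postVar (SigmaMat K σn2) p {q})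
    (p : D) (b : Finset D) :
    ∀ A : Finset D, Disjoint b A → p ∉ A → p ∉ b →
      (∀ q ∈ b, |K p q| ≤ σs2 * ξ) →
      Real.log (postVar (SigmaMat K σn2) p A) - Real.log (postVar (SigmaMat K σn2) p (A ∪ b))
        ≤ (b.card : ℝ) * Real.log (1 + ξ ^ 2 / ((σn2 / σs2) * (1 + σn2 / σs2))) := by
  induction b using Finset.induction_on with
  | empty => intro A _ _ _ _; simp
  | @insert q b' hq ih =>
    intro A hdisj hpA hpb hKb
    have hqA : q ∉ A := Finset.disjoint_left.mp hdisj (Finset.mem_insert_self q b')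
    have hdisj' : Disjoint b' A := Finset.disjoint_of_subset_left
      (Finset.subset_insert q b') hdisj
    have hpb' : p ∉ b' := fun h => hpb (Finset.mem_insert_of_mem h)
    have hpq : p ≠ q := fun h => hpb (h ▸ Finset.mem_insert_self q b')
    have hunion : A ∪ insert q b' = insert q (A ∪ b') := by
      ext z; simp only [Finset.mem_insert, Finset.mem_union]; tauto
    have hqAb' : q ∉ A ∪ b' := by
      simp only [Finset.mem_union]
      exact fun h => h.elim hqA hq
    have hpAb' : p ∉ A ∪ b' := by
      simp only [Finset.mem_union]
      exact fun h => h.elim hpA hpb'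
    have step := step_bound hK hKsymm hs hn hξ0 hKdiag hpq hpAb' hqAb'
      (hKb q (Finset.mem_insert_self q b'))
      (hsub p q (A ∪ b') hpAb' hqAb' hpq)
    have ihm := ih A hdisj' hpA hpb' (fun q' hq' => hKb q' (Finset.mem_insert_of_mem hq'))
    rw [hunion, Finset.card_insert_of_notMem hq]
    push_cast
    linarith

lemma outer_chain (hK : (Matrix.of K).PosSemidef) (hKsymm : ∀ p q : D, K p q = K q p)
    (hs : 0 < σs2) (hn : 0 < σn2) (hξ0 : 0 ≤ ξ)
    (hKdiag : ∀ p : D, K p p = σs2)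
    (hsub : ∀ (p q : D) (A : Finset D), p ∉ A → q ∉ A → p ≠ q →
      postVar (SigmaMat K σn2) p A - postVar (SigmaMat K σn2) p (insert q A)
        ≤ postVar (SigmaMat K σn2) p ∅ - postVar (SigmaMat K σn2) p {q})
    (b : Finset D) (a : Finset D) :
    ∀ S : Finset D, Disjoint a S → Disjoint a b → Disjoint b S →
      (∀ p ∈ a, ∀ q ∈ b, |K p q| ≤ σs2 * ξ) →
      Real.log (postCov (SigmaMat K σn2) a S).det
        - Real.log (postCov (SigmaMat K σn2) a (S ∪ b)).det
        ≤ (a.card : ℝ) * (b.card : ℝ)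
            * Real.log (1 + ξ ^ 2 / ((σn2 / σs2) * (1 + σn2 / σs2))) := by
  have hPD : (SigmaMat K σn2).PosDef := sigma_posDef hK hn
  induction a using Finset.induction_on with
  | empty =>
    intro S _ _ _ _
    have h1 : (postCov (SigmaMat K σn2) (∅ : Finset D) S).det = 1 := Matrix.det_isEmpty
    have h2 : (postCov (SigmaMat K σn2) (∅ : Finset D) (S ∪ b)).det = 1 := Matrix.det_isEmpty
    simp [h1, h2]
  | @insert p a' hp ih =>
    intro S haS hab hbS hKab
    have hpS : p ∉ S := Finset.disjoint_left.mp haS (Finset.mem_insert_self p a')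
    have hpa' : p ∉ a' := hp
    have hpb : p ∉ b := Finset.disjoint_left.mp hab (Finset.mem_insert_self p a')
    have ha'S : Disjoint a' S := Finset.disjoint_of_subset_left (Finset.subset_insert p a') haS
    have ha'b : Disjoint a' b := Finset.disjoint_of_subset_left (Finset.subset_insert p a') hab
    have ha'Sb : Disjoint a' (S ∪ b) := Finset.disjoint_union_right.mpr ⟨ha'S, ha'b⟩
    have h1 := det_postCov_insert hPD hpa' hpS ha'S
    have hpSb : p ∉ S ∪ b := by
      simp only [Finset.mem_union]; exact fun h => h.elim hpS hpb
    have h2 := det_postCov_insert hPD hpa' hpSb ha'Sb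
    have hset : (S ∪ b) ∪ a' = (S ∪ a') ∪ b := by
      ext z; simp [Finset.mem_union]; tauto
    rw [hset] at h2
    -- positivity facts
    have hd1 : 0 < (postCov (SigmaMat K σn2) a' S).det := postCov_det_pos hPD ha'S
    have hd2 : 0 < (postCov (SigmaMat K σn2) a' (S ∪ b)).det := postCov_det_pos hPD ha'Sb
    have hpSa' : p ∉ S ∪ a' := by
      simp only [Finset.mem_union]; exact fun h => h.elim hpS hpa'
    have hv1 : 0 < postVar (SigmaMat K σn2) p (S ∪ a') := postVar_pos hPD hpSa'
    have hv2 : 0 < postVar (SigmaMat K σn2) p ((S ∪ a') ∪ b) := by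
      refine postVar_pos hPD ?_
      simp only [Finset.mem_union]
      exact fun h => h.elim (fun h' => h'.elim hpS hpa') hpb
    have hbSa' : Disjoint b (S ∪ a') := Finset.disjoint_union_right.mpr ⟨hbS, ha'b.symm⟩
    have hinner := inner_chain hK hKsymm hs hn hξ0 hKdiag hsub p b (S ∪ a') hbSa' hpSa' hpb
      (fun q hq => hKab p (Finset.mem_insert_self p a') q hq)
    have ihm := ih S ha'S ha'b hbS
      (fun p' hp' q hq => hKab p' (Finset.mem_insert_of_mem hp') q hq)
    rw [h1, h2, Real.log_mul hd1.ne' hv1.ne', Real.log_mul hd2.ne' hv2.ne',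
      Finset.card_insert_of_notMem hpa']
    push_cast
    have hL : 0 ≤ Real.log (1 + ξ ^ 2 / ((σn2 / σs2) * (1 + σn2 / σs2))) := by
      apply Real.log_nonneg
      have : 0 ≤ ξ ^ 2 / ((σn2 / σs2) * (1 + σn2 / σs2)) := by positivity
      linarith
    nlinarith [ihm, hinner, hL]

end chains


/-- **Corollary on unobserved-location entropy reduction, late columns.** -/
theorem corollary_unobserved_entropy_reduction_late
    {D : Type*} [Fintype D] [DecidableEq D]
    (r n k m : ℕ) (col : D → ℕ)
    (K : D → D → ℝ) (σs2 σn2 l1 ξ : ℝ)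
    (hr : 1 ≤ r) (hk1 : 1 ≤ k) (hkr : k ≤ r) (hm : 1 ≤ m)
    (hs : 0 < σs2) (hn : 0 < σn2) (hl1 : 0 < l1)
    (hξ : ξ = Real.exp (-((m : ℝ) + 1) ^ 2 / (2 * l1 ^ 2)))
    (hKsymm : ∀ p q : D, K p q = K q p)
    (hKpsd : (Matrix.of K).PosSemidef)
    (hKdiag : ∀ p : D, K p p = σs2)
    (hcol : ∀ p : D, 1 ≤ col p ∧ col p ≤ n)
    (hcolcard : ∀ i : ℕ, 1 ≤ i → i ≤ n → (column col i).card = r)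
    (hdecay : ∀ p q : D, (m : ℤ) + 1 ≤ |(col p : ℤ) - (col q : ℤ)| → |K p q| ≤ σs2 * ξ)
    (hsub : ∀ (p q : D) (A : Finset D), p ∉ A → q ∉ A → p ≠ q →
      postVar (SigmaMat K σn2) p A - postVar (SigmaMat K σn2) p (insert q A)
        ≤ postVar (SigmaMat K σn2) p ∅ - postVar (SigmaMat K σn2) p {q})
    (i t : ℕ) (hi1 : 2 * m + 1 ≤ i) (hi2 : i ≤ n - 1) (ht1 : i + 1 ≤ t) (ht2 : t ≤ n)
    (x : ℕ → Finset D)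
    (hx : ∀ j : ℕ, 1 ≤ j → j ≤ n → x j ⊆ column col j ∧ (x j).card = k) :
    condEnt (SigmaMat K σn2) (ucomp col x t)
        (seg x 1 (i - m - 1) ∪ seg (ucomp col x) 1 (t - 1))
        - condEnt (SigmaMat K σn2) (ucomp col x t)
            ((seg x 1 (i - m - 1) ∪ seg (ucomp col x) 1 (t - 1)) ∪ x (i - m))
      ≤ (k : ℝ) * ((r : ℝ) - (k : ℝ)) * Real.log (1 + ξ ^ 2 / ((σn2 / σs2) * (1 + σn2 / σs2))) := by
  classical
  set Sg := SigmaMat K σn2 with hSgdef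
  set L := Real.log (1 + ξ ^ 2 / ((σn2 / σs2) * (1 + σn2 / σs2))) with hL
  set a : Finset D := ucomp col x t with ha
  set b : Finset D := x (i - m) with hb
  set S : Finset D := seg x 1 (i - m - 1) ∪ seg (ucomp col x) 1 (t - 1) with hS
  have hξ0 : (0:ℝ) ≤ ξ := by rw [hξ]; exact (Real.exp_pos _).le
  have hPD : Sg.PosDef := sigma_posDef hKpsd hn
  -- basic index facts
  have hm1 : m + 1 ≤ i - m := by omega
  have him1 : 1 ≤ i - m := by omega
  have himn : i - m ≤ n := by omega
  have ht1' : 1 ≤ t := by omega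
  have hcolmem : ∀ j : ℕ, ∀ z ∈ column col j, col z = j := by
    intro j z hz
    exact (Finset.mem_filter.mp hz).2
  have hacol : ∀ p ∈ a, col p = t := by
    intro p hp
    rw [ha, ucomp] at hp
    exact hcolmem t p (Finset.mem_sdiff.mp hp).1
  have hbcol : ∀ q ∈ b, col q = i - m := by
    intro q hq
    exact hcolmem (i - m) q ((hx (i - m) him1 himn).1 hq)
  have hsegxcol : ∀ j0 : ℕ, j0 ≤ n → ∀ z ∈ seg x 1 j0, col z ≤ j0 := by
    intro j0 hj0 z hz
    rw [seg, Finset.mem_biUnion] at hz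
    obtain ⟨j, hj, hzj⟩ := hz
    rw [Finset.mem_Icc] at hj
    have := hcolmem j z ((hx j hj.1 (le_trans hj.2 hj0)).1 hzj)
    omega
  have hsegucol : ∀ j0 : ℕ, ∀ z ∈ seg (ucomp col x) 1 j0, col z ≤ j0 := by
    intro j0 z hz
    rw [seg, Finset.mem_biUnion] at hz
    obtain ⟨j, hj, hzj⟩ := hz
    rw [Finset.mem_Icc] at hj
    rw [ucomp] at hzj
    have := hcolmem j z (Finset.mem_sdiff.mp hzj).1
    omega
  have hScol : ∀ z ∈ S, col z ≤ t - 1 := by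
    intro z hz
    rw [hS, Finset.mem_union] at hz
    rcases hz with hz | hz
    · have := hsegxcol (i - m - 1) (by omega) z hz
      omega
    · exact hsegucol (t - 1) z hz
  -- disjointness
  have haS : Disjoint a S := by
    rw [Finset.disjoint_left]
    intro z hza hzS
    have h1 := hacol z hza
    have h2 := hScol z hzS
    omega
  have hab : Disjoint a b := by
    rw [Finset.disjoint_left]
    intro z hza hzb
    have h1 := hacol z hza
    have h2 := hbcol z hzb
    omega
  have hbS : Disjoint b S := by
    rw [hS, Finset.disjoint_union_right]
    constructor
    · rw [Finset.disjoint_left]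
      intro z hzb hzS
      have h1 := hbcol z hzb
      have h2 := hsegxcol (i - m - 1) (by omega) z hzS
      omega
    · rw [Finset.disjoint_left]
      intro z hzb hzS
      rw [seg, Finset.mem_biUnion] at hzS
      obtain ⟨j, hj, hzj⟩ := hzS
      rw [Finset.mem_Icc] at hj
      rw [ucomp] at hzj
      rw [Finset.mem_sdiff] at hzj
      have hcz : col z = j := hcolmem j z hzj.1
      have hcz2 : col z = i - m := hbcol z hzb
      have : j = i - m := by omega
      exact hzj.2 (this ▸ hzb)
  -- decay on pairs
  have hKab : ∀ p ∈ a, ∀ q ∈ b, |K p q| ≤ σs2 * ξ := by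
    intro p hp q hq
    apply hdecay
    have h1 := hacol p hp
    have h2 := hbcol q hq
    rw [h1, h2]
    have hcast : ((i - m : ℕ) : ℤ) = (i : ℤ) - (m : ℤ) := by
      omega
    rw [hcast]
    rw [abs_of_nonneg (by omega)]
    omega
  -- cardinalities
  have hcarda : a.card = r - k := by
    rw [ha, ucomp, Finset.card_sdiff_of_subset (hx t ht1' ht2).1, hcolcard t ht1' ht2,
      (hx t ht1' ht2).2]
  have hcardb : b.card = k := (hx (i - m) him1 himn).2
  -- main chain bound
  have houter := outer_chain hKpsd hKsymm hs hn hξ0 hKdiag hsub b a S haS hab hbS hKab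
  rw [hcarda, hcardb] at houter
  -- entropy difference equals half the log-det difference
  have haSb : Disjoint a (S ∪ b) := Finset.disjoint_union_right.mpr ⟨haS, hab⟩
  have hd1 : 0 < (postCov Sg a S).det := postCov_det_pos hPD haS
  have hd2 : 0 < (postCov Sg a (S ∪ b)).det := postCov_det_pos hPD haSb
  have hpow : (0:ℝ) < (2 * Real.pi * Real.exp 1) ^ a.card := by positivity
  have hent : condEnt Sg a S - condEnt Sg a (S ∪ b)
      = (1/2) * (Real.log (postCov Sg a S).det - Real.log (postCov Sg a (S ∪ b)).det) := by
    rw [condEnt, condEnt, Real.log_mul hpow.ne' hd1.ne', Real.log_mul hpow.ne' hd2.ne']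
    ring
  rw [hent]
  have hL0 : 0 ≤ L := by
    rw [hL]
    apply Real.log_nonneg
    have : (0:ℝ) ≤ ξ ^ 2 / ((σn2 / σs2) * (1 + σn2 / σs2)) := by positivity
    linarith
  have hcast2 : ((r - k : ℕ) : ℝ) = (r : ℝ) - (k : ℝ) := by
    rw [Nat.cast_sub hkr]
  rw [hcast2] at houter
  have hk0 : (0:ℝ) ≤ (k : ℝ) := Nat.cast_nonneg k
  have hrk0 : (0:ℝ) ≤ (r : ℝ) - (k : ℝ) := by
    rw [← hcast2]; exact Nat.cast_nonneg _
  nlinarith [houter, hL0, mul_nonneg (mul_nonneg hrk0 hk0) hL0]
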